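/- Let G be a uniquely C4+-saturated graph with at least one triangle, and let A be the set of all vertices belonging to some triangle of G. Then every vertex of G is in A or adjacent to a vertex of A (i.e., no vertex is at distance 2 or more from A). -/

import Mathlib

open SimpleGraph

/-- The diamond graph `C₄⁺`: a `4`-cycle with one chord, i.e. `K₄` minus an edge. -/
def diamond : SimpleGraph (Fin 4) := (⊤ : SimpleGraph (Fin 4)).deleteEdges {s(0, 1)}

/-- `G'` is a copy of `H` in `G`, i.e. a subgraph of `G` isomorphic to `H`. -/
def IsCopy {W V : Type*} (H : SimpleGraph W) {G : SimpleGraph V} (G' : G.Subgraph) : Prop :=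
  Nonempty (G'.coe ≃g H)

/-- `G` is uniquely `H`-saturated: `G` is `H`-free, and adding any non-edge
creates exactly one copy of `H`. -/
def UniquelySaturated {W V : Type*} (H : SimpleGraph W) (G : SimpleGraph V) : Prop :=
  (∀ G' : G.Subgraph, ¬ IsCopy H G') ∧
    ∀ u v : V, u ≠ v → ¬ G.Adj u v →
      ∃! G' : (G ⊔ SimpleGraph.fromEdgeSet {s(u, v)}).Subgraph, IsCopy H G'

/-- The set of vertices belonging to some triangle of `G`. -/
def triangleVerts {V : Type*} (G : SimpleGraph V) : Set V :=
  {v | ∃ a b, G.Adj v a ∧ G.Adj v b ∧ G.Adj a b}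

/-! ### Auxiliary infrastructure -/

lemma diamond_adj (i j : Fin 4) :
    diamond.Adj i j ↔ i ≠ j ∧ ¬(i = 0 ∧ j = 1) ∧ ¬(i = 1 ∧ j = 0) := by
  simp only [diamond, deleteEdges_adj, top_adj, Set.mem_singleton_iff, Sym2.eq_iff]
  tauto

section Aux

variable {V : Type*}

/-- the vertex map of a labelled diamond -/
def dmap (p0 p1 p2 p3 : V) : Fin 4 → V :=
  fun i => match i with | 0 => p0 | 1 => p1 | 2 => p2 | 3 => p3

/-- The `5`-edge diamond pattern: `p0, p1` are the two degree-2 vertices. -/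
def diamondPattern (H : SimpleGraph V) (p0 p1 p2 p3 : V) : Prop :=
  H.Adj p0 p2 ∧ H.Adj p0 p3 ∧ H.Adj p1 p2 ∧ H.Adj p1 p3 ∧ H.Adj p2 p3

lemma mk_copy {H : SimpleGraph V} {p0 p1 p2 p3 : V} (h01 : p0 ≠ p1)
    (hpat : diamondPattern H p0 p1 p2 p3) :
    ∃ G' : H.Subgraph, IsCopy diamond G' ∧ G'.verts = {p0, p1, p2, p3} := by
  obtain ⟨h02, h03, h12, h13, h23⟩ := hpat
  have d02 : p0 ≠ p2 := h02.ne
  have d03 : p0 ≠ p3 := h03.ne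
  have d12 : p1 ≠ p2 := h12.ne
  have d13 : p1 ≠ p3 := h13.ne
  have d23 : p2 ≠ p3 := h23.ne
  have hfinj : Function.Injective (dmap p0 p1 p2 p3) := by
    intro i j hij
    fin_cases i <;> fin_cases j <;> simp_all [dmap]
  have hadjf : ∀ i j : Fin 4, diamond.Adj i j →
      H.Adj (dmap p0 p1 p2 p3 i) (dmap p0 p1 p2 p3 j) := by
    intro i j hij
    rw [diamond_adj] at hij
    fin_cases i <;> fin_cases j <;> simp_all [dmap] <;>
      first
        | exact h02 | exact h02.symm | exact h03 | exact h03.symm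
        | exact h12 | exact h12.symm | exact h13 | exact h13.symm
        | exact h23 | exact h23.symm
  set f := dmap p0 p1 p2 p3
  refine ⟨⟨Set.range f, fun z t => ∃ i j : Fin 4, diamond.Adj i j ∧ z = f i ∧ t = f j,
      ?_, ?_, ?_⟩, ?_, ?_⟩
  · rintro z t ⟨i, j, hij, rfl, rfl⟩
    exact hadjf i j hij
  · rintro z t ⟨i, j, hij, rfl, rfl⟩
    exact ⟨i, rfl⟩
  · refine ⟨?_⟩; rintro z t ⟨i, j, hij, rfl, rfl⟩
    exact ⟨j, i, hij.symm, rfl, rfl⟩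
  · refine ⟨RelIso.symm ⟨Equiv.ofBijective (fun i => ⟨f i, ⟨i, rfl⟩⟩) ⟨?_, ?_⟩, ?_⟩⟩
    · intro i j hij
      exact hfinj (congrArg Subtype.val hij)
    · rintro ⟨z, i, rfl⟩
      exact ⟨i, rfl⟩
    · intro i j
      show (∃ i' j', diamond.Adj i' j' ∧ f i = f i' ∧ f j = f j') ↔ diamond.Adj i j
      constructor
      · rintro ⟨i', j', hij', hi, hj⟩
        rw [hfinj hi, hfinj hj]; exact hij'
      · intro h
        exact ⟨i, j, h, rfl, rfl⟩
  · show Set.range f = _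
    ext z
    constructor
    · rintro ⟨i, rfl⟩
      fin_cases i <;> simp [f, dmap]
    · intro hz
      rcases hz with rfl | rfl | rfl | rfl
      exacts [⟨0, rfl⟩, ⟨1, rfl⟩, ⟨2, rfl⟩, ⟨3, rfl⟩]

lemma extract_copy {H : SimpleGraph V} {G' : H.Subgraph} (h : IsCopy diamond G') :
    ∃ p : Fin 4 → V, Function.Injective p ∧
      (∀ i j, G'.Adj (p i) (p j) ↔ diamond.Adj i j) ∧ G'.verts = Set.range p := by
  obtain ⟨e⟩ := h
  refine ⟨fun i => (e.symm i : V), ?_, ?_, ?_⟩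
  · intro i j hij
    exact e.symm.injective (Subtype.val_injective hij)
  · intro i j
    exact e.symm.map_rel_iff
  · ext z
    constructor
    · intro hz
      exact ⟨e ⟨z, hz⟩, by simp⟩
    · rintro ⟨i, rfl⟩
      exact (e.symm i).2

lemma copy_uses_edge {G : SimpleGraph V}
    (hfree : ∀ G'' : G.Subgraph, ¬ IsCopy diamond G'')
    {u w : V} (G' : (G ⊔ SimpleGraph.fromEdgeSet {s(u, w)}).Subgraph)
    (hc : IsCopy diamond G') :
    G'.Adj u w := by
  by_contra hno
  have hGadj : ∀ z t, G'.Adj z t → G.Adj z t := by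
    intro z t hzt
    have h2 := G'.adj_sub hzt
    rw [sup_adj, fromEdgeSet_adj] at h2
    rcases h2 with h2 | ⟨h2, hne⟩
    · exact h2
    · rw [Set.mem_singleton_iff, Sym2.eq_iff] at h2
      rcases h2 with ⟨rfl, rfl⟩ | ⟨rfl, rfl⟩
      · exact absurd hzt hno
      · exact absurd hzt.symm hno
  exact hfree ⟨G'.verts, G'.Adj, fun h => hGadj _ _ h, fun h => G'.edge_vert h, G'.symm⟩ hc

lemma adj_of_new {G : SimpleGraph V} {u w z t : V}
    (h : (G ⊔ SimpleGraph.fromEdgeSet {s(u, w)}).Adj z t)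
    (h1 : ¬(z = u ∧ t = w)) (h2 : ¬(z = w ∧ t = u)) : G.Adj z t := by
  rw [sup_adj, fromEdgeSet_adj] at h
  rcases h with h | ⟨h, hne⟩
  · exact h
  · rw [Set.mem_singleton_iff, Sym2.eq_iff] at h
    tauto

/-- Case analysis for the unique diamond copy created by adding a non-edge `uw`:
either two common neighbours of `u` and `w`, or a triangle through `w` together with a
common neighbour, or a triangle through `u` together with a common neighbour. -/
lemma create_cases {G : SimpleGraph V}
    (hfree : ∀ G'' : G.Subgraph, ¬ IsCopy diamond G'')
    {u w : V} (G' : (G ⊔ SimpleGraph.fromEdgeSet {s(u, w)}).Subgraph)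
    (hc : IsCopy diamond G') :
    ∃ p r : V, p ≠ r ∧ p ≠ u ∧ p ≠ w ∧ r ≠ u ∧ r ≠ w ∧
      ((G.Adj u p ∧ G.Adj u r ∧ G.Adj w p ∧ G.Adj w r) ∨
       (G.Adj w p ∧ G.Adj w r ∧ G.Adj p r ∧ G.Adj u r) ∨
       (G.Adj u p ∧ G.Adj u r ∧ G.Adj p r ∧ G.Adj w r)) := by
  obtain ⟨q, hqinj, hqadj, hverts⟩ := extract_copy hc
  have huse := copy_uses_edge hfree G' hc
  have hu : u ∈ G'.verts := G'.edge_vert huse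
  have hw : w ∈ G'.verts := G'.edge_vert huse.symm
  rw [hverts] at hu hw
  obtain ⟨i, hi⟩ := hu
  obtain ⟨j, hj⟩ := hw
  have hdij : diamond.Adj i j := (hqadj i j).mp (by rw [hi, hj]; exact huse)
  have hG : ∀ k l : Fin 4, diamond.Adj k l → ¬(q k = u ∧ q l = w) → ¬(q k = w ∧ q l = u) →
      G.Adj (q k) (q l) := by
    intro k l hd h1 h2
    exact adj_of_new (G'.adj_sub ((hqadj k l).mpr hd)) h1 h2
  have hne : ∀ k l : Fin 4, k ≠ l → q k ≠ q l := by
    intro k l hkl h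
    exact hkl (hqinj h)
  subst hi
  subst hj
  rw [diamond_adj] at hdij
  have hGq : ∀ k l : Fin 4, (k ≠ l ∧ ¬(k = 0 ∧ l = 1) ∧ ¬(k = 1 ∧ l = 0)) →
      ¬(k = i ∧ l = j) → ¬(k = j ∧ l = i) → G.Adj (q k) (q l) := by
    intro k l hd h1 h2
    refine hG k l ((diamond_adj k l).mpr hd) ?_ ?_
    · rintro ⟨ha, hb⟩
      exact h1 ⟨hqinj ha, hqinj hb⟩
    · rintro ⟨ha, hb⟩
      exact h2 ⟨hqinj ha, hqinj hb⟩
  clear hG hqadj hverts huse hc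
  fin_cases i <;> fin_cases j <;>
    first
      | (exact absurd hdij (by decide))
      | (exact ⟨q 1, q 3, hne 1 3 (by decide), hne 1 0 (by decide), hne 1 2 (by decide),
          hne 3 0 (by decide), hne 3 2 (by decide),
          Or.inr (Or.inl ⟨hGq 2 1 (by decide) (by decide) (by decide),
            hGq 2 3 (by decide) (by decide) (by decide),
            hGq 1 3 (by decide) (by decide) (by decide),
            hGq 0 3 (by decide) (by decide) (by decide)⟩)⟩)
      | (exact ⟨q 1, q 3, hne 1 3 (by decide), hne 1 2 (by decide), hne 1 0 (by decide),
          hne 3 2 (by decide), hne 3 0 (by decide),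
          Or.inr (Or.inr ⟨hGq 2 1 (by decide) (by decide) (by decide),
            hGq 2 3 (by decide) (by decide) (by decide),
            hGq 1 3 (by decide) (by decide) (by decide),
            hGq 0 3 (by decide) (by decide) (by decide)⟩)⟩)
      | (exact ⟨q 1, q 2, hne 1 2 (by decide), hne 1 0 (by decide), hne 1 3 (by decide),
          hne 2 0 (by decide), hne 2 3 (by decide),
          Or.inr (Or.inl ⟨hGq 3 1 (by decide) (by decide) (by decide),
            hGq 3 2 (by decide) (by decide) (by decide),
            hGq 1 2 (by decide) (by decide) (by decide),
            hGq 0 2 (by decide) (by decide) (by decide)⟩)⟩)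
      | (exact ⟨q 1, q 2, hne 1 2 (by decide), hne 1 3 (by decide), hne 1 0 (by decide),
          hne 2 3 (by decide), hne 2 0 (by decide),
          Or.inr (Or.inr ⟨hGq 3 1 (by decide) (by decide) (by decide),
            hGq 3 2 (by decide) (by decide) (by decide),
            hGq 1 2 (by decide) (by decide) (by decide),
            hGq 0 2 (by decide) (by decide) (by decide)⟩)⟩)
      | (exact ⟨q 0, q 3, hne 0 3 (by decide), hne 0 1 (by decide), hne 0 2 (by decide),
          hne 3 1 (by decide), hne 3 2 (by decide),
          Or.inr (Or.inl ⟨hGq 2 0 (by decide) (by decide) (by decide),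
            hGq 2 3 (by decide) (by decide) (by decide),
            hGq 0 3 (by decide) (by decide) (by decide),
            hGq 1 3 (by decide) (by decide) (by decide)⟩)⟩)
      | (exact ⟨q 0, q 3, hne 0 3 (by decide), hne 0 2 (by decide), hne 0 1 (by decide),
          hne 3 2 (by decide), hne 3 1 (by decide),
          Or.inr (Or.inr ⟨hGq 2 0 (by decide) (by decide) (by decide),
            hGq 2 3 (by decide) (by decide) (by decide),
            hGq 0 3 (by decide) (by decide) (by decide),
            hGq 1 3 (by decide) (by decide) (by decide)⟩)⟩)
      | (exact ⟨q 0, q 2, hne 0 2 (by decide), hne 0 1 (by decide), hne 0 3 (by decide),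
          hne 2 1 (by decide), hne 2 3 (by decide),
          Or.inr (Or.inl ⟨hGq 3 0 (by decide) (by decide) (by decide),
            hGq 3 2 (by decide) (by decide) (by decide),
            hGq 0 2 (by decide) (by decide) (by decide),
            hGq 1 2 (by decide) (by decide) (by decide)⟩)⟩)
      | (exact ⟨q 0, q 2, hne 0 2 (by decide), hne 0 3 (by decide), hne 0 1 (by decide),
          hne 2 3 (by decide), hne 2 1 (by decide),
          Or.inr (Or.inr ⟨hGq 3 0 (by decide) (by decide) (by decide),
            hGq 3 2 (by decide) (by decide) (by decide),
            hGq 0 2 (by decide) (by decide) (by decide),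
            hGq 1 2 (by decide) (by decide) (by decide)⟩)⟩)
      | (exact ⟨q 0, q 1, hne 0 1 (by decide), hne 0 2 (by decide), hne 0 3 (by decide),
          hne 1 2 (by decide), hne 1 3 (by decide),
          Or.inl ⟨hGq 2 0 (by decide) (by decide) (by decide),
            hGq 2 1 (by decide) (by decide) (by decide),
            hGq 3 0 (by decide) (by decide) (by decide),
            hGq 3 1 (by decide) (by decide) (by decide)⟩⟩)
      | (exact ⟨q 0, q 1, hne 0 1 (by decide), hne 0 3 (by decide), hne 0 2 (by decide),
          hne 1 3 (by decide), hne 1 2 (by decide),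
          Or.inl ⟨hGq 3 0 (by decide) (by decide) (by decide),
            hGq 3 1 (by decide) (by decide) (by decide),
            hGq 2 0 (by decide) (by decide) (by decide),
            hGq 2 1 (by decide) (by decide) (by decide)⟩⟩)

lemma no_pattern_G {G : SimpleGraph V}
    (hfree : ∀ G'' : G.Subgraph, ¬ IsCopy diamond G'')
    {p0 p1 p2 p3 : V} (h01 : p0 ≠ p1) (hpat : diamondPattern G p0 p1 p2 p3) : False := by
  obtain ⟨G', hG', _⟩ := mk_copy h01 hpat
  exact hfree G' hG'

lemma set4_ne {a0 a1 a2 a3 b0 b1 b2 b3 q : V}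
    (h : q = a0 ∨ q = a1 ∨ q = a2 ∨ q = a3)
    (h0 : q ≠ b0) (h1 : q ≠ b1) (h2 : q ≠ b2) (h3 : q ≠ b3) :
    ({a0, a1, a2, a3} : Set V) ≠ {b0, b1, b2, b3} := by
  intro he
  have hq : q ∈ ({a0, a1, a2, a3} : Set V) := by
    rcases h with rfl | rfl | rfl | rfl <;> simp
  rw [he] at hq
  simp only [Set.mem_insert_iff, Set.mem_singleton_iff] at hq
  tauto

lemma two_copies {G : SimpleGraph V} {u w : V}
    (hex : ∃! G' : (G ⊔ SimpleGraph.fromEdgeSet {s(u, w)}).Subgraph, IsCopy diamond G')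
    {a0 a1 a2 a3 b0 b1 b2 b3 : V} (ha : a0 ≠ a1) (hb : b0 ≠ b1)
    (hpa : diamondPattern (G ⊔ SimpleGraph.fromEdgeSet {s(u, w)}) a0 a1 a2 a3)
    (hpb : diamondPattern (G ⊔ SimpleGraph.fromEdgeSet {s(u, w)}) b0 b1 b2 b3)
    (hne : ({a0, a1, a2, a3} : Set V) ≠ {b0, b1, b2, b3}) : False := by
  obtain ⟨A, hA, hAv⟩ := mk_copy ha hpa
  obtain ⟨B, hB, hBv⟩ := mk_copy hb hpb
  obtain ⟨C, _, huniq⟩ := hex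
  have hAB : A = B := (huniq A hA).trans (huniq B hB).symm
  rw [← hAv, ← hBv, hAB] at hne
  exact hne rfl

lemma liftAdj {G : SimpleGraph V} {u w z t : V} (h : G.Adj z t) :
    (G ⊔ SimpleGraph.fromEdgeSet {s(u, w)}).Adj z t := by
  rw [sup_adj]; exact Or.inl h

lemma newAdj {G : SimpleGraph V} {u w : V} (h : u ≠ w) :
    (G ⊔ SimpleGraph.fromEdgeSet {s(u, w)}).Adj u w := by
  rw [sup_adj, fromEdgeSet_adj]; exact Or.inr ⟨rfl, h⟩

end Aux

theorem stmt9 {V : Type*} [Fintype V] (G : SimpleGraph V)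
    (hsat : UniquelySaturated diamond G)
    (htri : ∃ a b c : V, G.Adj a b ∧ G.Adj a c ∧ G.Adj b c) :
    ∀ v : V, v ∈ triangleVerts G ∨ ∃ a ∈ triangleVerts G, G.Adj v a := by
  classical
  intro v
  by_contra hcon
  push_neg at hcon
  obtain ⟨hv1, hv2⟩ := hcon
  obtain ⟨a, b, c, hab, hac, hbc⟩ := htri
  have hfree := hsat.1
  have hadd := hsat.2
  have memA : ∀ {p q r : V}, G.Adj p q → G.Adj p r → G.Adj q r → p ∈ triangleVerts G :=
    fun h1 h2 h3 => ⟨_, _, h1, h2, h3⟩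
  have haA : a ∈ triangleVerts G := memA hab hac hbc
  have hbA : b ∈ triangleVerts G := memA hab.symm hbc hac
  have hcA : c ∈ triangleVerts G := memA hac.symm hbc.symm hab
  have hnbrA : ∀ {z : V}, G.Adj v z → z ∉ triangleVerts G := fun hz ht => hv2 _ ht hz
  have hindep : ∀ {p r : V}, G.Adj v p → G.Adj v r → ¬ G.Adj p r :=
    fun h1 h2 h3 => hv1 (memA h1 h2 h3)
  have hva : ¬ G.Adj v a := fun h => hv2 a haA h
  have hvb : ¬ G.Adj v b := fun h => hv2 b hbA h
  have hvc : ¬ G.Adj v c := fun h => hv2 c hcA h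
  have hvnea : v ≠ a := fun h => hv1 (h ▸ haA)
  have hvneb : v ≠ b := fun h => hv1 (h ▸ hbA)
  have hvnec : v ≠ c := fun h => hv1 (h ▸ hcA)
  -- Step 1: common neighbours x, y of v and a
  obtain ⟨Gd, hGd, _⟩ := hadd v a hvnea hva
  obtain ⟨x, y, hxyne, hxnv, hxna, hynv, hyna, hcase⟩ := create_cases hfree Gd hGd
  have hxy : G.Adj v x ∧ G.Adj v y ∧ G.Adj a x ∧ G.Adj a y := by
    rcases hcase with ⟨h1, h2, h3, h4⟩ | ⟨h1, h2, h3, h4⟩ | ⟨h1, h2, h3, h4⟩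
    · exact ⟨h1, h2, h3, h4⟩
    · exact absurd (memA h2.symm h3.symm h1) (hnbrA h4)
    · exact absurd (memA h1 h2 h3) hv1
  obtain ⟨hvx, hvy, hax, hay⟩ := hxy
  have hxA : x ∉ triangleVerts G := hnbrA hvx
  have hyA : y ∉ triangleVerts G := hnbrA hvy
  have hnxy : ¬ G.Adj x y := hindep hvx hvy
  have hxb : ¬ G.Adj x b := fun h => hxA (memA hax.symm h hab)
  have hxc : ¬ G.Adj x c := fun h => hxA (memA hax.symm h hac)
  have hxnb : x ≠ b := fun h => hxA (h ▸ hbA)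
  have hxnc : x ≠ c := fun h => hxA (h ▸ hcA)
  -- L2 : common neighbours of v and a are only x and y
  have hL2 : ∀ z : V, G.Adj v z → G.Adj a z → z = x ∨ z = y := by
    intro z h1 h2
    by_contra hz
    push_neg at hz
    exact two_copies (hadd v a hvnea hva) hxyne (Ne.symm hz.1)
      ⟨liftAdj hvx.symm, liftAdj hax.symm, liftAdj hvy.symm, liftAdj hay.symm, newAdj hvnea⟩
      ⟨liftAdj hvx.symm, liftAdj hax.symm, liftAdj h1.symm, liftAdj h2.symm, newAdj hvnea⟩
      (set4_ne (Or.inr (Or.inl rfl)) (fun h => hxyne h.symm) (Ne.symm hz.2)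
        hvy.ne' hay.ne')
  -- L3 : common neighbours of x and y are only v and a
  have hL3 : ∀ z : V, G.Adj x z → G.Adj y z → z = v ∨ z = a := by
    intro z h1 h2
    by_contra hz
    push_neg at hz
    have hvnez : v ≠ z := fun h => hz.1 h.symm
    exact two_copies (hadd x y hxyne hnxy) hvnea hvnez
      ⟨liftAdj hvx, liftAdj hvy, liftAdj hax, liftAdj hay, newAdj hxyne⟩
      ⟨liftAdj hvx, liftAdj hvy, liftAdj h1.symm, liftAdj h2.symm, newAdj hxyne⟩
      (set4_ne (Or.inr (Or.inl rfl)) hvnea.symm (Ne.symm hz.2) hax.ne hay.ne)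
  -- Finsets
  set K : Finset V := Finset.univ.filter (fun s => G.Adj v s) with hK
  set Nx : Finset V := Finset.univ.filter (fun z => G.Adj x z ∧ ¬ G.Adj v z ∧ z ≠ v) with hNx
  set Sa : Finset V := Finset.univ.filter (fun z => G.Adj a z ∧ ¬ G.Adj v z ∧ z ≠ v) with hSa
  have hxK : x ∈ K := by simp [hK, hvx]
  have hyK : y ∈ K := by simp [hK, hvy]
  have haNx : a ∈ Nx := by simp [hNx, hax.symm, hva, hvnea.symm]
  have hbSa : b ∈ Sa := by simp [hSa, hab, hvb, hvneb.symm]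
  have hcSa : c ∈ Sa := by simp [hSa, hac, hvc, hvnec.symm]
  -- Claim A : K.erase x injects into Nx
  have claimA : (K.erase x).card ≤ Nx.card := by
    have hex : ∀ s ∈ K.erase x, ∃ m : V, G.Adj x m ∧ G.Adj s m ∧ m ≠ v ∧ ¬ G.Adj v m := by
      intro s hs
      obtain ⟨hsnx, hsK⟩ := Finset.mem_erase.mp hs
      have hvs : G.Adj v s := by simpa [hK] using hsK
      have hxs : ¬ G.Adj x s := hindep hvx hvs
      obtain ⟨Gd2, hGd2, _⟩ := hadd x s (fun h => hsnx h.symm) hxs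
      obtain ⟨p, r, hpr, hpx, hps, hrx, hrs, hc0⟩ := create_cases hfree Gd2 hGd2
      rcases hc0 with ⟨h1, h2, h3, h4⟩ | ⟨h1, h2, h3, h4⟩ | ⟨h1, h2, h3, h4⟩
      · rcases eq_or_ne p v with rfl | hpv
        · exact ⟨r, h2, h4, Ne.symm hpr, fun hvr => hv1 (memA hvr hvs h4.symm)⟩
        · exact ⟨p, h1, h3, hpv, fun hvp => hv1 (memA hvp hvs h3.symm)⟩
      · exact absurd (memA h1 h2 h3) (hnbrA hvs)
      · exact absurd (memA h1 h2 h3) hxA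
    set f : V → V := fun s =>
      if h : ∃ m : V, G.Adj x m ∧ G.Adj s m ∧ m ≠ v ∧ ¬ G.Adj v m then h.choose else v with hfdef
    apply Finset.card_le_card_of_injOn f
    · intro s hs
      obtain ⟨m, hm⟩ := hex s hs
      have hhyp : ∃ m : V, G.Adj x m ∧ G.Adj s m ∧ m ≠ v ∧ ¬ G.Adj v m := ⟨m, hm⟩
      have hfs : f s = hhyp.choose := by simp only [hfdef]; exact dif_pos hhyp
      obtain ⟨c1, c2, c3, c4⟩ := hhyp.choose_spec
      rw [hfs]
      simp [hNx, c1, c3, c4]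
    · intro s hs s' hs' hff
      by_contra hss
      obtain ⟨m, hm⟩ := hex s hs
      have hh1 : ∃ m : V, G.Adj x m ∧ G.Adj s m ∧ m ≠ v ∧ ¬ G.Adj v m := ⟨m, hm⟩
      obtain ⟨m', hm'⟩ := hex s' hs'
      have hh2 : ∃ m : V, G.Adj x m ∧ G.Adj s' m ∧ m ≠ v ∧ ¬ G.Adj v m := ⟨m', hm'⟩
      have e1 : f s = hh1.choose := by simp only [hfdef]; exact dif_pos hh1
      have e2 : f s' = hh2.choose := by simp only [hfdef]; exact dif_pos hh2
      obtain ⟨c1, c2, c3, c4⟩ := hh1.choose_spec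
      obtain ⟨d1, d2, d3, d4⟩ := hh2.choose_spec
      set w0 := hh1.choose
      have hw0 : hh2.choose = w0 := by rw [← e2, ← hff, e1]
      rw [hw0] at d1 d2 d3 d4
      obtain ⟨hsnx, hsK⟩ := Finset.mem_erase.mp hs
      obtain ⟨hs'nx, hs'K⟩ := Finset.mem_erase.mp hs'
      have hvs : G.Adj v s := by simpa [hK] using hsK
      have hvs' : G.Adj v s' := by simpa [hK] using hs'K
      exact two_copies (hadd v w0 (Ne.symm c3) c4) hss hsnx
        ⟨liftAdj hvs.symm, liftAdj c2, liftAdj hvs'.symm, liftAdj d2, newAdj (Ne.symm c3)⟩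
        ⟨liftAdj hvs.symm, liftAdj c2, liftAdj hvx.symm, liftAdj c1, newAdj (Ne.symm c3)⟩
        (set4_ne (Or.inr (Or.inl rfl)) (Ne.symm hss) hs'nx hvs'.ne' d2.ne)
  -- Claim B : Nx.erase a injects into (Sa.erase b).erase c
  have claimB : (Nx.erase a).card ≤ ((Sa.erase b).erase c).card := by
    have hex : ∀ β ∈ Nx.erase a, ∃ w : V, G.Adj a w ∧ G.Adj β w ∧ w ≠ x ∧ w ≠ b ∧ w ≠ c ∧
        ¬ G.Adj v w ∧ w ≠ v := by
      intro β hβ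
      obtain ⟨hβna, hβNx⟩ := Finset.mem_erase.mp hβ
      have hβp : G.Adj x β ∧ ¬ G.Adj v β ∧ β ≠ v := by simpa [hNx] using hβNx
      obtain ⟨hxβ, hvβ, hβv⟩ := hβp
      have hnaβ : ¬ G.Adj a β := fun h => hxA (memA hax.symm hxβ h)
      have haneβ : a ≠ β := Ne.symm hβna
      obtain ⟨Gd3, hGd3, _⟩ := hadd a β haneβ hnaβ
      obtain ⟨p, r, hpr, hpa, hpβ, hra, hrβ, hc0⟩ := create_cases hfree Gd3 hGd3
      rcases hc0 with ⟨h1, h2, h3, h4⟩ | ⟨h1, h2, h3, h4⟩ | ⟨h1, h2, h3, h4⟩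
      · -- p, r common neighbours of a and β; pick the one ≠ x
        have hpick : ∃ w : V, G.Adj a w ∧ G.Adj β w ∧ w ≠ x := by
          rcases eq_or_ne p x with rfl | hpx0
          · exact ⟨r, h2, h4, fun h => hpr h.symm⟩
          · exact ⟨p, h1, h3, hpx0⟩
        obtain ⟨w, hw1, hw2, hw3⟩ := hpick
        have hwv : w ≠ v := by
          intro h
          rw [h] at hw1
          exact hva hw1.symm
        have hvw : ¬ G.Adj v w := by
          intro hvw0
          rcases hL2 w hvw0 hw1 with rfl | rfl
          · exact hw3 rfl
          · rcases hL3 β hxβ hw2.symm with rfl | rfl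
            · exact hβv rfl
            · exact hβna rfl
        have hwb : w ≠ b := by
          intro h
          have hβb : G.Adj β b := h ▸ hw2
          exact two_copies (hadd x b hxnb hxb) haneβ hxnc
            ⟨liftAdj hax, liftAdj hab, liftAdj hxβ.symm, liftAdj hβb, newAdj hxnb⟩
            ⟨liftAdj hax.symm, newAdj hxnb, liftAdj hac.symm, liftAdj hbc.symm, liftAdj hab⟩
            (set4_ne (Or.inr (Or.inl rfl)) hxβ.ne' (fun h2 => hxc (h2 ▸ hxβ))
              hβna hβb.ne)
        have hwc : w ≠ c := by
          intro h
          have hβc : G.Adj β c := h ▸ hw2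
          exact two_copies (hadd x c hxnc hxc) haneβ hxnb
            ⟨liftAdj hax, liftAdj hac, liftAdj hxβ.symm, liftAdj hβc, newAdj hxnc⟩
            ⟨liftAdj hax.symm, newAdj hxnc, liftAdj hab.symm, liftAdj hbc, liftAdj hac⟩
            (set4_ne (Or.inr (Or.inl rfl)) hxβ.ne' (fun h2 => hxb (h2 ▸ hxβ))
              hβna hβc.ne)
        exact ⟨w, hw1, hw2, hw3, hwb, hwc, hvw, hwv⟩
      · -- triangle β p r with a adjacent to r : two copies at (a, β)
        exfalso
        have hrA : r ∈ triangleVerts G := memA h2.symm h3.symm h1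
        have hpA : p ∈ triangleVerts G := memA h1.symm h3 h2
        exact two_copies (hadd a β haneβ hnaβ) (Ne.symm hpa) (by intro h; rw [h] at hxA; exact hxA hrA)
          ⟨newAdj haneβ, liftAdj h4, liftAdj h1.symm, liftAdj h3, liftAdj h2⟩
          ⟨liftAdj hax.symm, liftAdj hxβ, liftAdj h4.symm, liftAdj h2.symm, newAdj haneβ⟩
          (set4_ne (Or.inr (Or.inl rfl)) (fun h => hxA (h ▸ hpA)) hpr hpa hpβ)
      · -- triangle a p r with β adjacent to r : two copies at (a, β)
        exfalso
        have hrA : r ∈ triangleVerts G := memA h2.symm h3.symm h1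
        have hpA : p ∈ triangleVerts G := memA h1.symm h3 h2
        exact two_copies (hadd a β haneβ hnaβ) (Ne.symm hpβ) (by intro h; rw [h] at hxA; exact hxA hrA)
          ⟨(newAdj haneβ).symm, liftAdj h4, liftAdj h1.symm, liftAdj h3, liftAdj h2⟩
          ⟨liftAdj hax.symm, liftAdj hxβ, liftAdj h2.symm, liftAdj h4.symm, newAdj haneβ⟩
          (set4_ne (Or.inr (Or.inl rfl)) (fun h => hxA (h ▸ hpA)) hpr hpa hpβ)
    set g : V → V := fun β =>
      if h : ∃ w : V, G.Adj a w ∧ G.Adj β w ∧ w ≠ x ∧ w ≠ b ∧ w ≠ c ∧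
          ¬ G.Adj v w ∧ w ≠ v then h.choose else v with hgdef
    apply Finset.card_le_card_of_injOn g
    · intro β hβ
      obtain ⟨w, hw⟩ := hex β hβ
      have hh : ∃ w : V, G.Adj a w ∧ G.Adj β w ∧ w ≠ x ∧ w ≠ b ∧ w ≠ c ∧
          ¬ G.Adj v w ∧ w ≠ v := ⟨w, hw⟩
      have hgβ : g β = hh.choose := by simp only [hgdef]; exact dif_pos hh
      obtain ⟨c1, c2, c3, c4, c5, c6, c7⟩ := hh.choose_spec
      rw [hgβ]
      simp only [Finset.mem_coe, Finset.mem_erase]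
      exact ⟨c5, c4, by simp [hSa, c1, c6, c7]⟩
    · intro β hβ β' hβ' hgg
      by_contra hββ
      obtain ⟨w, hw⟩ := hex β hβ
      have hh1 : ∃ w : V, G.Adj a w ∧ G.Adj β w ∧ w ≠ x ∧ w ≠ b ∧ w ≠ c ∧
          ¬ G.Adj v w ∧ w ≠ v := ⟨w, hw⟩
      obtain ⟨w', hw'⟩ := hex β' hβ'
      have hh2 : ∃ w : V, G.Adj a w ∧ G.Adj β' w ∧ w ≠ x ∧ w ≠ b ∧ w ≠ c ∧
          ¬ G.Adj v w ∧ w ≠ v := ⟨w', hw'⟩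
      have e1 : g β = hh1.choose := by simp only [hgdef]; exact dif_pos hh1
      have e2 : g β' = hh2.choose := by simp only [hgdef]; exact dif_pos hh2
      obtain ⟨c1, c2, c3, c4, c5, c6, c7⟩ := hh1.choose_spec
      obtain ⟨d1, d2, d3, d4, d5, d6, d7⟩ := hh2.choose_spec
      set w0 := hh1.choose
      have hw0 : hh2.choose = w0 := by rw [← e2, ← hgg, e1]
      rw [hw0] at d1 d2 d3 d4 d5 d6 d7
      obtain ⟨hβna, hβNx⟩ := Finset.mem_erase.mp hβ
      obtain ⟨hβ'na, hβ'Nx⟩ := Finset.mem_erase.mp hβ'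
      have hβp : G.Adj x β ∧ ¬ G.Adj v β ∧ β ≠ v := by simpa [hNx] using hβNx
      have hβ'p : G.Adj x β' ∧ ¬ G.Adj v β' ∧ β' ≠ v := by simpa [hNx] using hβ'Nx
      have hxw0 : ¬ G.Adj x w0 := fun h => hxA (memA h hax.symm c1.symm)
      have hxnw0 : x ≠ w0 := Ne.symm c3
      exact two_copies (hadd x w0 hxnw0 hxw0) (Ne.symm hβna) (Ne.symm hβ'na)
        ⟨liftAdj hax, liftAdj c1, liftAdj hβp.1.symm, liftAdj c2, newAdj hxnw0⟩
        ⟨liftAdj hax, liftAdj c1, liftAdj hβ'p.1.symm, liftAdj d2, newAdj hxnw0⟩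
        (set4_ne (Or.inr (Or.inl rfl)) hβna hββ hβp.1.ne' c2.ne)
  -- Claim C : each vertex of Sa has at least two neighbours in K
  have cardC1 : ∀ w0 ∈ Sa, 2 ≤ (K.filter (fun s => G.Adj s w0)).card := by
    intro w0 hw0
    have hw0p : G.Adj a w0 ∧ ¬ G.Adj v w0 ∧ w0 ≠ v := by simpa [hSa] using hw0
    obtain ⟨hw1, hw2, hw3⟩ := hw0p
    obtain ⟨Gd4, hGd4, _⟩ := hadd v w0 (Ne.symm hw3) hw2
    obtain ⟨p, r, hpr, hpv, hpw, hrv, hrw, hc0⟩ := create_cases hfree Gd4 hGd4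
    rcases hc0 with ⟨h1, h2, h3, h4⟩ | ⟨h1, h2, h3, h4⟩ | ⟨h1, h2, h3, h4⟩
    · have hsub : {p, r} ⊆ K.filter (fun s => G.Adj s w0) := by
        intro z hz
        simp only [Finset.mem_insert, Finset.mem_singleton] at hz
        rcases hz with rfl | rfl
        · simp [hK, h1, h3.symm]
        · simp [hK, h2, h4.symm]
      calc 2 = ({p, r} : Finset V).card := by
            rw [Finset.card_insert_of_notMem (by simpa using hpr), Finset.card_singleton]
        _ ≤ _ := Finset.card_le_card hsub
    · exact absurd (memA h2.symm h3.symm h1) (hnbrA h4)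
    · exact absurd (memA h1 h2 h3) hv1
  have cardC2 : ∀ s0 : V, s0 ∈ K → s0 ≠ x → s0 ≠ y →
      (Sa.filter (fun z => G.Adj s0 z)).card ≤ 2 := by
    intro s0 hs0 hs0x hs0y
    have hvs0 : G.Adj v s0 := by simpa [hK] using hs0
    by_contra hgt
    push_neg at hgt
    obtain ⟨r1, r2, r3, hr1, hr2, hr3, h12, h13, h23⟩ := Finset.two_lt_card_iff.mp hgt
    simp only [Finset.mem_filter] at hr1 hr2 hr3
    have hr1a : G.Adj a r1 := (show G.Adj a r1 ∧ ¬ G.Adj v r1 ∧ r1 ≠ v by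
      simpa [hSa] using hr1.1).1
    have hr2a : G.Adj a r2 := (show G.Adj a r2 ∧ ¬ G.Adj v r2 ∧ r2 ≠ v by
      simpa [hSa] using hr2.1).1
    have hr3a : G.Adj a r3 := (show G.Adj a r3 ∧ ¬ G.Adj v r3 ∧ r3 ≠ v by
      simpa [hSa] using hr3.1).1
    have hs0a : ¬ G.Adj s0 a := by
      intro h
      rcases hL2 s0 hvs0 h.symm with rfl | rfl
      · exact hs0x rfl
      · exact hs0y rfl
    have hs0na : s0 ≠ a := fun h => hva (h ▸ hvs0)
    exact two_copies (hadd s0 a hs0na hs0a) h12 h13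
      ⟨liftAdj hr1.2.symm, liftAdj hr1a.symm, liftAdj hr2.2.symm, liftAdj hr2a.symm,
        newAdj hs0na⟩
      ⟨liftAdj hr1.2.symm, liftAdj hr1a.symm, liftAdj hr3.2.symm, liftAdj hr3a.symm,
        newAdj hs0na⟩
      (set4_ne (Or.inr (Or.inl rfl)) (Ne.symm h12) h23 hr2.2.ne' hr2a.ne')
  have cardC3 : (Sa.filter (fun z => G.Adj x z)).card ≤ 1 := by
    apply Finset.card_le_one.mpr
    intro r1 hr1 r2 hr2
    by_contra h12
    simp only [Finset.mem_filter] at hr1 hr2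
    have hr1a : G.Adj a r1 := (show G.Adj a r1 ∧ ¬ G.Adj v r1 ∧ r1 ≠ v by
      simpa [hSa] using hr1.1).1
    have hr2a : G.Adj a r2 := (show G.Adj a r2 ∧ ¬ G.Adj v r2 ∧ r2 ≠ v by
      simpa [hSa] using hr2.1).1
    exact no_pattern_G hfree h12
      ⟨hr1.2.symm, hr1a.symm, hr2.2.symm, hr2a.symm, hax.symm⟩
  have cardC3y : (Sa.filter (fun z => G.Adj y z)).card ≤ 1 := by
    apply Finset.card_le_one.mpr
    intro r1 hr1 r2 hr2
    by_contra h12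
    simp only [Finset.mem_filter] at hr1 hr2
    have hr1a : G.Adj a r1 := (show G.Adj a r1 ∧ ¬ G.Adj v r1 ∧ r1 ≠ v by
      simpa [hSa] using hr1.1).1
    have hr2a : G.Adj a r2 := (show G.Adj a r2 ∧ ¬ G.Adj v r2 ∧ r2 ≠ v by
      simpa [hSa] using hr2.1).1
    exact no_pattern_G hfree h12
      ⟨hr1.2.symm, hr1a.symm, hr2.2.symm, hr2a.symm, hay.symm⟩
  -- double counting
  have hdouble : ∑ w0 ∈ Sa, (K.filter (fun s => G.Adj s w0)).card
      = ∑ s0 ∈ K, (Sa.filter (fun z => G.Adj s0 z)).card := by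
    simp_rw [Finset.card_filter]
    exact Finset.sum_comm
  have hlower : 2 * Sa.card ≤ ∑ w0 ∈ Sa, (K.filter (fun s => G.Adj s w0)).card := by
    calc 2 * Sa.card = ∑ _w0 ∈ Sa, 2 := by rw [Finset.sum_const, smul_eq_mul, mul_comm]
      _ ≤ _ := Finset.sum_le_sum cardC1
  have hyK' : y ∈ K.erase x := Finset.mem_erase.mpr ⟨fun h => hxyne h.symm, hyK⟩
  have hsplit1 : ∑ s0 ∈ K, (Sa.filter (fun z => G.Adj s0 z)).card
      = (∑ s0 ∈ K.erase x, (Sa.filter (fun z => G.Adj s0 z)).card)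
        + (Sa.filter (fun z => G.Adj x z)).card :=
    (Finset.sum_erase_add K _ hxK).symm
  have hsplit2 : ∑ s0 ∈ K.erase x, (Sa.filter (fun z => G.Adj s0 z)).card
      = (∑ s0 ∈ (K.erase x).erase y, (Sa.filter (fun z => G.Adj s0 z)).card)
        + (Sa.filter (fun z => G.Adj y z)).card :=
    (Finset.sum_erase_add (K.erase x) _ hyK').symm
  have hrest : ∑ s0 ∈ (K.erase x).erase y, (Sa.filter (fun z => G.Adj s0 z)).card
      ≤ ((K.erase x).erase y).card * 2 := by
    have h := Finset.sum_le_card_nsmul ((K.erase x).erase y)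
      (fun s0 => (Sa.filter (fun z => G.Adj s0 z)).card) 2 ?_
    · simpa [smul_eq_mul] using h
    · intro s0 hs0
      obtain ⟨hs0y, hs0'⟩ := Finset.mem_erase.mp hs0
      obtain ⟨hs0x, hs0K⟩ := Finset.mem_erase.mp hs0'
      exact cardC2 s0 hs0K hs0x hs0y
  -- cardinal bookkeeping
  have hc_in : c ∈ Sa.erase b := Finset.mem_erase.mpr ⟨hbc.ne', hcSa⟩
  have hSacard : (Sa.erase b).card = Sa.card - 1 := Finset.card_erase_of_mem hbSa
  have hSacard2 : ((Sa.erase b).erase c).card = (Sa.erase b).card - 1 :=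
    Finset.card_erase_of_mem hc_in
  have hNxcard : (Nx.erase a).card = Nx.card - 1 := Finset.card_erase_of_mem haNx
  have hKxcard : (K.erase x).card = K.card - 1 := Finset.card_erase_of_mem hxK
  have hKxycard : ((K.erase x).erase y).card = (K.erase x).card - 1 :=
    Finset.card_erase_of_mem hyK'
  have hSa2 : 2 ≤ Sa.card := by
    have hsub : ({b, c} : Finset V) ⊆ Sa := by
      intro z hz
      simp only [Finset.mem_insert, Finset.mem_singleton] at hz
      rcases hz with rfl | rfl
      · exact hbSa
      · exact hcSa
    calc 2 = ({b, c} : Finset V).card := by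
          rw [Finset.card_insert_of_notMem (by simpa using hbc.ne), Finset.card_singleton]
      _ ≤ Sa.card := Finset.card_le_card hsub
  have hNx1 : 1 ≤ Nx.card := Finset.card_pos.mpr ⟨a, haNx⟩
  have hK2 : 2 ≤ K.card := by
    have hsub : ({x, y} : Finset V) ⊆ K := by
      intro z hz
      simp only [Finset.mem_insert, Finset.mem_singleton] at hz
      rcases hz with rfl | rfl
      · exact hxK
      · exact hyK
    calc 2 = ({x, y} : Finset V).card := by
          rw [Finset.card_insert_of_notMem (by simpa using hxyne), Finset.card_singleton]
      _ ≤ K.card := Finset.card_le_card hsub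
  omega
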